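/- Let d ≥ 1 be a real number and let Ψ > 0 satisfy (d+1)(Ψ+1)^d = Ψ^{d+1}. Let w > 0 be the real number with w·e^w = d/(d+1). Then d/w − 1 ≤ Ψ ≤ d/w. -/

import Mathlib

private lemma Fmono (d a b : ℝ) (hd : 0 ≤ d) (ha : 0 < a) (hab : a < b) :
    (d + 1) * Real.log a - d * Real.log (a + 1) <
      (d + 1) * Real.log b - d * Real.log (b + 1) := by
  have hb : 0 < b := ha.trans hab
  have h1 : Real.log a < Real.log b := Real.log_lt_log ha hab
  have h2 : Real.log (b + 1) - Real.log (a + 1) ≤ Real.log b - Real.log a := by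
    rw [← Real.log_div (by positivity) (by positivity),
      ← Real.log_div (by positivity) (by positivity)]
    apply Real.log_le_log (by positivity)
    rw [div_le_div_iff₀ (by positivity) (by positivity)]
    nlinarith
  have h3 : 0 ≤ Real.log (b + 1) - Real.log (a + 1) :=
    sub_nonneg.2 (Real.log_le_log (by positivity) (by linarith))
  nlinarith [mul_le_mul_of_nonneg_left h2 hd]

/-- `Ψ_d ∈ [d / W(d/(d+1)) - 1, d / W(d/(d+1))]`, where `W` is the Lambert-W function
on the nonnegative reals, encoded implicitly by `w * e^w = d/(d+1)`. -/
theorem psi_lambertW_bounds (d : ℝ) (hd : 1 ≤ d) (Ψ : ℝ) (hΨpos : 0 < Ψ)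
    (hΨ : (d + 1) * (Ψ + 1) ^ d = Ψ ^ (d + 1))
    (w : ℝ) (hw : 0 < w) (hweq : w * Real.exp w = d / (d + 1)) :
    d / w - 1 ≤ Ψ ∧ Ψ ≤ d / w := by
  have hd0 : 0 < d := lt_of_lt_of_le one_pos hd
  have hd1 : (0:ℝ) < d + 1 := by linarith
  set t := d / w with ht
  have ht0 : 0 < t := div_pos hd0 hw
  have hexp : (d + 1) * Real.exp w = t := by
    rw [ht, eq_div_iff hw.ne']
    have h := hweq
    field_simp at h
    linear_combination h
  have hexpgt : 1 < Real.exp w := by rw [← Real.exp_zero]; exact Real.exp_lt_exp.2 hw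
  have htd : d + 1 < t := by nlinarith
  have ht1 : (1:ℝ) < t := by linarith
  have hlogt : Real.log t = Real.log (d + 1) + w := by
    rw [← hexp, Real.log_mul hd1.ne' (Real.exp_pos w).ne', Real.log_exp]
  have hw' : w = d / t := by
    rw [ht]
    field_simp
  have hFΨ : (d + 1) * Real.log Ψ - d * Real.log (Ψ + 1) = Real.log (d + 1) := by
    have h := congrArg Real.log hΨ
    rw [Real.log_mul hd1.ne' (ne_of_gt (by positivity)),
      Real.log_rpow (by positivity), Real.log_rpow hΨpos] at h
    linarith
  -- upper bound: log(d+1) ≤ F t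
  have hFt : Real.log (d + 1) ≤ (d + 1) * Real.log t - d * Real.log (t + 1) := by
    have h1 : Real.log (t + 1) - Real.log t ≤ 1 / t := by
      have h := Real.log_le_sub_one_of_pos (show 0 < (t + 1) / t by positivity)
      rw [Real.log_div (by positivity) ht0.ne'] at h
      have he : (t + 1) / t - 1 = 1 / t := by field_simp; ring
      linarith [he ▸ h]
    have h2 : d * (Real.log (t + 1) - Real.log t) ≤ d * (1 / t) :=
      mul_le_mul_of_nonneg_left h1 hd0.le
    have h3 : d * (1 / t) = w := by rw [hw']; ring
    nlinarith [h2]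
  -- lower bound: F (t-1) ≤ log(d+1)
  have hFt1 : (d + 1) * Real.log (t - 1) - d * Real.log t ≤ Real.log (d + 1) := by
    have h1 : Real.log (t - 1) - Real.log t ≤ -(1 / t) := by
      have h := Real.log_le_sub_one_of_pos (show 0 < (t - 1) / t by
        apply div_pos <;> linarith)
      rw [Real.log_div (by linarith) ht0.ne'] at h
      have he : (t - 1) / t - 1 = -(1 / t) := by field_simp; ring
      linarith [he ▸ h]
    have h2 : (d + 1) * (Real.log (t - 1) - Real.log t) ≤ (d + 1) * (-(1 / t)) :=
      mul_le_mul_of_nonneg_left h1 hd1.le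
    have h3 : (d + 1) * (-(1 / t)) = -w - 1 / t := by rw [hw']; ring
    have h4 : 0 < 1 / t := by positivity
    nlinarith [h2]
  constructor
  · by_contra h
    push_neg at h
    have hm := Fmono d Ψ (t - 1) hd0.le hΨpos h
    rw [show t - 1 + 1 = t by ring, hFΨ] at hm
    linarith
  · by_contra h
    push_neg at h
    have hm := Fmono d t Ψ hd0.le ht0 h
    rw [hFΨ] at hm
    linarith
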